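/- In the greedy domination algorithm on a finite simple graph G, define w(u) = 1/|F(u)| for each vertex u, where F(u) is the set of vertices first dominated at the same greedy step as u. Then for every vertex v, Σ_{u∈N[v]} w(u) ≤ 1 + ln(1 + Δ(G)). -/

import Mathlib

open Finset

namespace SG

variable {V : Type*}

/-- Closed neighborhood of a vertex as a `Finset`. -/
def closedNbhd [Fintype V] [DecidableEq V] (G : SimpleGraph V) [DecidableRel G.Adj]
    (v : V) : Finset V :=
  insert v (G.neighborFinset v)

/-- A fractional domination: weights in `[0,1]` with each closed neighborhood of weight `≥ 1`. -/
def IsFracDom [Fintype V] [DecidableEq V] (G : SimpleGraph V) [DecidableRel G.Adj]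
    (f : V → ℝ) : Prop :=
  (∀ v, 0 ≤ f v ∧ f v ≤ 1) ∧ ∀ v, 1 ≤ ∑ u ∈ closedNbhd G v, f u

/-- The fractional domination number. -/
noncomputable def fracDomNumber [Fintype V] [DecidableEq V] (G : SimpleGraph V)
    [DecidableRel G.Adj] : ℝ :=
  sInf {x | ∃ f, IsFracDom G f ∧ x = ∑ v, f v}

/-- A dominating set: every vertex not in `S` is adjacent to some vertex of `S`. -/
def IsDomSet (G : SimpleGraph V) (S : Finset V) : Prop :=
  ∀ v, v ∉ S → ∃ u ∈ S, G.Adj u v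

/-- The domination number. -/
noncomputable def domNumber [Fintype V] (G : SimpleGraph V) : ℕ :=
  sInf {k | ∃ S : Finset V, S.card = k ∧ IsDomSet G S}

variable [Fintype V] [LinearOrder V]

/-- Number of new (not yet dominated) vertices that `v` would dominate, given
that the vertices of `D` are already dominated. -/
def newScore (G : SimpleGraph V) [DecidableRel G.Adj] (D : Finset V) (v : V) : ℕ :=
  (closedNbhd G v \ D).card

/-- One run of the greedy domination algorithm (with fuel), starting with the
vertices of `D` already dominated.  At each step we pick a vertex dominating as
many new vertices as possible, ties broken by taking the earliest vertex in the
linear order on `V`. -/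
def greedyAux (G : SimpleGraph V) [DecidableRel G.Adj] : ℕ → Finset V → List V
  | 0, _ => []
  | (n + 1), D =>
    if D = Finset.univ then []
    else
      let C := Finset.univ.filter fun v => ∀ u, newScore G D u ≤ newScore G D v
      if h : C.Nonempty then
        C.min' h :: greedyAux G n (D ∪ closedNbhd G (C.min' h))
      else []

/-- The greedy dominating sequence of `G`. -/
def greedyList (G : SimpleGraph V) [DecidableRel G.Adj] : List V :=
  greedyAux G (Fintype.card V) ∅

/-- The greedy domination number: the length of the greedy dominating sequence. -/
def greedyNumber (G : SimpleGraph V) [DecidableRel G.Adj] : ℕ :=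
  (greedyList G).length

/-- The index of the first vertex in the greedy dominating sequence which dominates `u`. -/
def stepOf (G : SimpleGraph V) [DecidableRel G.Adj] (u : V) : ℕ :=
  (greedyList G).findIdx fun x => u ∈ closedNbhd G x

/-- `F(u)`: the set of vertices first dominated at the same greedy step as `u`. -/
def Fset (G : SimpleGraph V) [DecidableRel G.Adj] (u : V) : Finset V :=
  Finset.univ.filter fun w => stepOf G w = stepOf G u



variable (G : SimpleGraph V) [DecidableRel G.Adj]

lemma mem_closedNbhd_self (v : V) : v ∈ closedNbhd G v := mem_insert_self _ _

/-- union of closed neighborhoods of a list -/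
def unionNbhd (L : List V) : Finset V := L.foldr (fun x s => closedNbhd G x ∪ s) ∅

@[simp] lemma unionNbhd_nil : unionNbhd G ([] : List V) = ∅ := rfl

@[simp] lemma unionNbhd_cons (x : V) (L : List V) :
    unionNbhd G (x :: L) = closedNbhd G x ∪ unionNbhd G L := rfl

lemma mem_unionNbhd {u : V} {L : List V} :
    u ∈ unionNbhd G L ↔ ∃ x ∈ L, u ∈ closedNbhd G x := by
  induction L with
  | nil => simp
  | cons a L ih => simp [ih, or_and_right, exists_or]

lemma C_nonempty (D : Finset V) (hD : D ≠ Finset.univ) :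
    (Finset.univ.filter fun v => ∀ u, newScore G D u ≤ newScore G D v).Nonempty := by
  have hw : ∃ w : V, w ∉ D := by
    by_contra h; push_neg at h; exact hD (eq_univ_iff_forall.mpr h)
  obtain ⟨w, -⟩ := hw
  obtain ⟨b, -, hb⟩ := Finset.exists_max_image Finset.univ (newScore G D) ⟨w, mem_univ w⟩
  exact ⟨b, mem_filter.mpr ⟨mem_univ b, fun u => hb u (mem_univ u)⟩⟩

lemma newScore_pos (D : Finset V) (hD : D ≠ Finset.univ) {c : V}
    (hc : ∀ u, newScore G D u ≤ newScore G D c) : 0 < newScore G D c := by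
  have hw : ∃ w : V, w ∉ D := by
    by_contra h; push_neg at h; exact hD (eq_univ_iff_forall.mpr h)
  obtain ⟨w, hw⟩ := hw
  have : 0 < newScore G D w :=
    Finset.card_pos.mpr ⟨w, Finset.mem_sdiff.mpr ⟨mem_closedNbhd_self G w, hw⟩⟩
  exact lt_of_lt_of_le this (hc w)

lemma greedyAux_succ (n : ℕ) (D : Finset V) (hD : D ≠ Finset.univ) :
    ∃ c : V, (∀ u, newScore G D u ≤ newScore G D c) ∧
      greedyAux G (n + 1) D = c :: greedyAux G n (D ∪ closedNbhd G c) := by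
  have h := C_nonempty G D hD
  refine ⟨(Finset.univ.filter fun v => ∀ u, newScore G D u ≤ newScore G D v).min' h, ?_, ?_⟩
  · have := Finset.min'_mem _ h
    exact (mem_filter.mp this).2
  · rw [greedyAux, if_neg hD, dif_pos h]

lemma cover_aux : ∀ (n : ℕ) (D : Finset V), Fintype.card V ≤ n + D.card →
    ∀ u : V, u ∈ D ∨ ∃ x ∈ greedyAux G n D, u ∈ closedNbhd G x := by
  intro n
  induction n with
  | zero =>
    intro D hcard u
    left
    have : D = Finset.univ := Finset.eq_univ_of_card D
      (le_antisymm (Finset.card_le_univ D) (by simpa using hcard))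
    simp [this]
  | succ n ih =>
    intro D hcard u
    by_cases hD : D = Finset.univ
    · left; simp [hD]
    · obtain ⟨c, hc, hL⟩ := greedyAux_succ G n D hD
      have hpos := newScore_pos G D hD hc
      have hcard' : Fintype.card V ≤ n + (D ∪ closedNbhd G c).card := by
        have h1 : newScore G D c + D.card = (closedNbhd G c ∪ D).card :=
          Finset.card_sdiff_add_card _ _
        rw [Finset.union_comm]
        omega
      rcases ih (D ∪ closedNbhd G c) hcard' u with h | ⟨x, hx, hux⟩
      · rcases Finset.mem_union.mp h with h | h
        · exact Or.inl h
        · exact Or.inr ⟨c, by rw [hL]; exact List.mem_cons_self, h⟩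
      · exact Or.inr ⟨x, by rw [hL]; exact List.mem_cons_of_mem _ hx, hux⟩

lemma greedy_max_aux : ∀ (n : ℕ) (D : Finset V) (i : ℕ)
    (hi : i < (greedyAux G n D).length) (w : V),
    newScore G (D ∪ unionNbhd G ((greedyAux G n D).take i)) w ≤
      newScore G (D ∪ unionNbhd G ((greedyAux G n D).take i))
        ((greedyAux G n D)[i]'hi) := by
  intro n
  induction n with
  | zero => intro D i hi; simp [greedyAux] at hi
  | succ n ih =>
    intro D i hi w
    by_cases hD : D = Finset.univ
    · rw [greedyAux, if_pos hD] at hi; simp at hi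
    · obtain ⟨c, hc, hL⟩ := greedyAux_succ G n D hD
      cases i with
      | zero =>
        simp only [hL, List.take_zero, unionNbhd_nil, Finset.union_empty, List.getElem_cons_zero]
        exact hc w
      | succ i =>
        have hi' : i < (greedyAux G n (D ∪ closedNbhd G c)).length := by
          rw [hL] at hi; simpa using hi
        have := ih (D ∪ closedNbhd G c) i hi' w
        simp only [hL, List.take_succ_cons, unionNbhd_cons, List.getElem_cons_succ]
        rwa [← Finset.union_assoc]
lemma exists_dominator (u : V) : ∃ x ∈ greedyList G, u ∈ closedNbhd G x := by
  have := cover_aux G (Fintype.card V) ∅ (by simp) u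
  simpa [greedyList] using this

lemma stepOf_lt_length (u : V) : stepOf G u < (greedyList G).length := by
  apply List.findIdx_lt_length_of_exists
  obtain ⟨x, hx, hux⟩ := exists_dominator G u
  exact ⟨x, hx, by simpa using hux⟩

lemma mem_closedNbhd_stepOf (u : V) :
    u ∈ closedNbhd G ((greedyList G)[stepOf G u]'(stepOf_lt_length G u)) := by
  have := List.findIdx_getElem (p := fun x => decide (u ∈ closedNbhd G x))
    (xs := greedyList G) (w := stepOf_lt_length G u)
  simp only [decide_eq_true_eq] at this
  exact this

/-- dominated set after `i` steps -/
def DomAt (i : ℕ) : Finset V := unionNbhd G ((greedyList G).take i)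

lemma mem_DomAt {u : V} {i : ℕ} : u ∈ DomAt G i ↔ stepOf G u < i := by
  rw [DomAt, mem_unionNbhd]
  constructor
  · rintro ⟨x, hx, hux⟩
    have hfound : ((greedyList G).take i).findIdx (fun x => u ∈ closedNbhd G x) <
        ((greedyList G).take i).length :=
      List.findIdx_lt_length_of_exists ⟨x, hx, by simpa using hux⟩
    have heq := List.IsPrefix.findIdx_eq_of_findIdx_lt_length
      (p := fun x => decide (u ∈ closedNbhd G x))
      (List.take_prefix i (greedyList G)) hfound
    rw [stepOf, heq]
    exact lt_of_lt_of_le hfound (by simp)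
  · intro h
    have hlt := stepOf_lt_length G u
    have hlen : stepOf G u < ((greedyList G).take i).length := by
      simp [List.length_take]; omega
    refine ⟨((greedyList G).take i)[stepOf G u]'hlen, List.getElem_mem _, ?_⟩
    rw [List.getElem_take]
    exact mem_closedNbhd_stepOf G u

lemma stepOf_eq_iff {u : V} {i : ℕ} (hi : i < (greedyList G).length) :
    stepOf G u = i ↔ u ∈ closedNbhd G ((greedyList G)[i]'hi) ∧ ¬ stepOf G u < i := by
  constructor
  · rintro rfl
    exact ⟨mem_closedNbhd_stepOf G u, lt_irrefl _⟩
  · rintro ⟨h1, h2⟩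
    have hle : stepOf G u ≤ i := by
      by_contra hgt
      push_neg at hgt
      have := List.not_of_lt_findIdx (p := fun x => decide (u ∈ closedNbhd G x))
        (xs := greedyList G) (i := i) hgt
      simp only [decide_eq_false_iff_not] at this
      exact this h1
    omega

lemma greedy_max (i : ℕ) (hi : i < (greedyList G).length) (w : V) :
    newScore G (DomAt G i) w ≤ newScore G (DomAt G i) ((greedyList G)[i]'hi) := by
  have := greedy_max_aux G (Fintype.card V) ∅ i hi w
  simp only [Finset.empty_union] at this
  exact this

lemma Nly_eq (i : ℕ) (hi : i < (greedyList G).length) :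
    (Finset.univ.filter fun w => stepOf G w = i) =
      closedNbhd G ((greedyList G)[i]'hi) \ DomAt G i := by
  ext w
  simp only [mem_filter, mem_univ, true_and, Finset.mem_sdiff, mem_DomAt]
  exact stepOf_eq_iff G hi
lemma harmonic_cast (m : ℕ) : ((harmonic m : ℚ) : ℝ) = ∑ k ∈ Finset.range m, (1 : ℝ) / (k + 1) := by
  rw [harmonic]
  push_cast
  simp [one_div]

lemma frac_step (a r' r s : ℕ) (h1 : a + r' = r) (h2 : r ≤ s) :
    (a : ℝ) / s ≤ ((harmonic r : ℚ) : ℝ) - ((harmonic r' : ℚ) : ℝ) := by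
  rcases Nat.eq_zero_or_pos r with hr | hr
  · have ha : a = 0 := by omega
    have hr' : r' = 0 := by omega
    simp [ha, hr', hr]
  · have hs : 0 < s := lt_of_lt_of_le hr h2
    have hr'le : r' ≤ r := by omega
    have key : ((r - r' : ℕ) : ℝ) * (1 / r) ≤ ∑ k ∈ Finset.Ico r' r, (1 : ℝ) / (k + 1) := by
      have hb : ∀ k ∈ Finset.Ico r' r, (1 : ℝ) / r ≤ 1 / (k + 1) := by
        intro k hk
        rw [Finset.mem_Ico] at hk
        apply one_div_le_one_div_of_le (by positivity)
        have : (k : ℝ) + 1 ≤ r := by exact_mod_cast Nat.succ_le_of_lt hk.2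
        exact this
      have := Finset.card_nsmul_le_sum (Finset.Ico r' r) (fun k => (1 : ℝ) / (k + 1)) (1 / r) hb
      simpa [Nat.card_Ico, nsmul_eq_mul] using this
    have hcalc : (a : ℝ) / s ≤ (a : ℝ) / r := by
      apply div_le_div_of_nonneg_left (by positivity) (by exact_mod_cast hr) (by exact_mod_cast h2)
    calc (a : ℝ) / s ≤ (a : ℝ) / r := hcalc
      _ = ((r - r' : ℕ) : ℝ) * (1 / r) := by
          have : a = r - r' := by omega
          rw [this, mul_one_div, div_eq_div_iff] <;> norm_num
          · positivity
          · positivity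
      _ ≤ ∑ k ∈ Finset.Ico r' r, (1 : ℝ) / (k + 1) := key
      _ = ((harmonic r : ℚ) : ℝ) - ((harmonic r' : ℚ) : ℝ) := by
          rw [harmonic_cast, harmonic_cast, Finset.sum_Ico_eq_sub _ hr'le]

/-- with `w(u) = 1/|F(u)|`, for every vertex `v` we have
`∑_{u ∈ N[v]} w(u) ≤ 1 + ln(1 + Δ(G))`. -/
theorem greedy_weight_nbhd_le {V : Type*} [Fintype V] [LinearOrder V]
    (G : SimpleGraph V) [DecidableRel G.Adj] (v : V) :
    ∑ u ∈ closedNbhd G v, (1 : ℝ) / ((Fset G u).card : ℝ)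
      ≤ 1 + Real.log (1 + (G.maxDegree : ℝ)) := by
  classical
  set n := (greedyList G).length with hn
  set H : ℕ → ℝ := fun m => ((harmonic m : ℚ) : ℝ) with hH
  set r : ℕ → ℕ := fun i => (closedNbhd G v \ DomAt G i).card with hrdef
  -- decompose the sum by fibers of `stepOf`
  have hmaps : ∀ u ∈ closedNbhd G v, stepOf G u ∈ Finset.range n := fun u _ =>
    Finset.mem_range.mpr (stepOf_lt_length G u)
  have hfib := Finset.sum_fiberwise_of_maps_to hmaps
    (fun u => (1 : ℝ) / ((Fset G u).card : ℝ))
  rw [← hfib]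
  -- bound each fiber sum
  have hinner : ∀ i ∈ Finset.range n,
      (∑ u ∈ (closedNbhd G v).filter (fun u => stepOf G u = i),
        (1 : ℝ) / ((Fset G u).card : ℝ)) ≤ H (r i) - H (r (i + 1)) := by
    intro i hi
    rw [Finset.mem_range] at hi
    set s := (Finset.univ.filter fun w => stepOf G w = i).card with hs
    set a := ((closedNbhd G v).filter (fun u => stepOf G u = i)).card with ha
    have hFset : ∀ u ∈ (closedNbhd G v).filter (fun u => stepOf G u = i),
        (Fset G u).card = s := by
      intro u hu
      have : stepOf G u = i := (Finset.mem_filter.mp hu).2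
      rw [hs, Fset, this]
    have hsum : (∑ u ∈ (closedNbhd G v).filter (fun u => stepOf G u = i),
        (1 : ℝ) / ((Fset G u).card : ℝ)) = (a : ℝ) / s := by
      rw [Finset.sum_congr rfl (fun u hu => by rw [hFset u hu])]
      rw [Finset.sum_const, ha, nsmul_eq_mul, mul_one_div]
    rw [hsum]
    -- greedy bound: r i ≤ s
    have hrs : r i ≤ s := by
      rw [hs, Nly_eq G i hi]
      exact greedy_max G i hi v
    -- decomposition: a + r (i+1) = r i
    have hdec : a + r (i + 1) = r i := by
      rw [ha, hrdef]
      have hunion : ((closedNbhd G v).filter (fun u => stepOf G u = i)) ∪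
          (closedNbhd G v \ DomAt G (i + 1)) = closedNbhd G v \ DomAt G i := by
        ext u
        simp only [Finset.mem_union, Finset.mem_filter, Finset.mem_sdiff, mem_DomAt]
        constructor
        · rintro (⟨h1, h2⟩ | ⟨h1, h2⟩)
          · exact ⟨h1, by omega⟩
          · exact ⟨h1, by omega⟩
        · rintro ⟨h1, h2⟩
          by_cases h : stepOf G u = i
          · exact Or.inl ⟨h1, h⟩
          · exact Or.inr ⟨h1, by omega⟩
      have hdisj : Disjoint ((closedNbhd G v).filter (fun u => stepOf G u = i))
          (closedNbhd G v \ DomAt G (i + 1)) := by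
        rw [Finset.disjoint_left]
        intro u hu hu'
        have h1 : stepOf G u = i := (Finset.mem_filter.mp hu).2
        have h2 : ¬ stepOf G u < i + 1 := by
          have := (Finset.mem_sdiff.mp hu').2
          rw [mem_DomAt] at this
          exact this
        omega
      rw [← Finset.card_union_of_disjoint hdisj, hunion]
    exact frac_step a (r (i + 1)) (r i) s hdec hrs
  have hle := Finset.sum_le_sum hinner
  have htel : (∑ i ∈ Finset.range n, (H (r i) - H (r (i + 1)))) = H (r 0) - H (r n) :=
    Finset.sum_range_sub' (fun i => H (r i)) n
  have hrn : r n = 0 := by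
    have hDn : DomAt G n = Finset.univ :=
      Finset.eq_univ_iff_forall.mpr fun u => (mem_DomAt G).mpr (stepOf_lt_length G u)
    rw [hrdef]
    simp [hDn]
  have hr0 : r 0 = G.degree v + 1 := by
    have hD0 : DomAt G 0 = ∅ := rfl
    rw [hrdef]
    simp only [hD0, Finset.sdiff_empty, closedNbhd]
    rw [Finset.card_insert_of_notMem (G.notMem_neighborFinset_self v),
      G.card_neighborFinset_eq_degree]
  have hlog : Real.log (r 0) ≤ Real.log (1 + (G.maxDegree : ℝ)) := by
    apply Real.log_le_log
    · rw [hr0]; positivity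
    · rw [hr0]
      push_cast
      have h1 := G.degree_le_maxDegree v
      have h2 : (G.degree v : ℝ) ≤ G.maxDegree := by exact_mod_cast h1
      linarith
  have hfinal : H (r 0) ≤ 1 + Real.log (1 + (G.maxDegree : ℝ)) := by
    have h3 := harmonic_le_one_add_log (r 0)
    calc H (r 0) ≤ 1 + Real.log (r 0) := h3
      _ ≤ 1 + Real.log (1 + (G.maxDegree : ℝ)) := by linarith
  calc (∑ i ∈ Finset.range n, ∑ u ∈ (closedNbhd G v).filter (fun u => stepOf G u = i),
        (1 : ℝ) / ((Fset G u).card : ℝ)) ≤ ∑ i ∈ Finset.range n, (H (r i) - H (r (i + 1))) := hle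
    _ = H (r 0) - H (r n) := htel
    _ = H (r 0) := by rw [hrn]; simp [hH]
    _ ≤ 1 + Real.log (1 + (G.maxDegree : ℝ)) := hfinal


end SG
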